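/- For every nonnegative integer s: d₄(21s + 11, 3) = 16s + 7, d₄(21s + 16, 3) = 16s + 11, and d₄(21s + 20, 3) = 16s + 14; that is, for each of these lengths n and corresponding values d there exists a quaternary Hermitian LCD [n,3] code with minimum weight d, and every quaternary Hermitian LCD [n,3] code has minimum weight at most d. -/

import Mathlib

open scoped Classical

noncomputable section

/-- The finite field with four elements. -/
abbrev F4 := GaloisField 2 2

/-- The (Hamming) weight of a vector over `F4`: the number of nonzero coordinates. -/
def wt {n : ℕ} (x : Fin n → F4) : ℕ :=
  (Finset.univ.filter (fun i => x i ≠ 0)).card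

/-- Hermitian inner product on `F4^n`: `∑ i, x i * (conj (y i))` with `conj z = z^2`. -/
def hermInner {n : ℕ} (x y : Fin n → F4) : F4 :=
  ∑ i, x i * (y i) ^ 2

/-- Membership in the Hermitian dual `C^{⊥H}` of a code `C`. -/
def inHermDual {n : ℕ} (C : Submodule F4 (Fin n → F4)) (x : Fin n → F4) : Prop :=
  ∀ y ∈ C, hermInner x y = 0

/-- `C` is Hermitian LCD: `C ∩ C^{⊥H} = {0}`. -/
def IsHermLCD {n : ℕ} (C : Submodule F4 (Fin n → F4)) : Prop :=
  ∀ x ∈ C, inHermDual C x → x = 0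

/-- `C` has minimum weight (exactly) `d`. -/
def minWtIs {n : ℕ} (C : Submodule F4 (Fin n → F4)) (d : ℕ) : Prop :=
  (∃ x ∈ C, x ≠ 0 ∧ wt x = d) ∧ ∀ x ∈ C, x ≠ 0 → d ≤ wt x

/-- `C` is a quaternary Hermitian LCD `[n,k,d]` code. -/
def IsHermLCDCode (n k d : ℕ) (C : Submodule F4 (Fin n → F4)) : Prop :=
  Module.finrank F4 C = k ∧ IsHermLCD C ∧ minWtIs C d

/-- `d₄(n,k) = d`: the largest minimum weight among quaternary Hermitian LCD `[n,k]` codes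
is `d`. -/
def d4Is (n k d : ℕ) : Prop :=
  (∃ C : Submodule F4 (Fin n → F4), IsHermLCDCode n k d C) ∧
  (∀ C : Submodule F4 (Fin n → F4), Module.finrank F4 C = k → IsHermLCD C →
    ∃ x ∈ C, x ≠ 0 ∧ wt x ≤ d)

end

-- ====== K4 : computable model of GF(4) ======
structure K4 where
  a : Bool
  b : Bool
deriving DecidableEq, Fintype

instance : Zero K4 := ⟨⟨false, false⟩⟩
instance : One K4 := ⟨⟨true, false⟩⟩
instance : Add K4 := ⟨fun x y => ⟨xor x.a y.a, xor x.b y.b⟩⟩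
instance : Mul K4 := ⟨fun x y => ⟨xor (x.a && y.a) (x.b && y.b), xor (xor (x.a && y.b) (x.b && y.a)) (x.b && y.b)⟩⟩

instance : AddCommMonoid K4 where
  add_assoc := by decide
  zero_add := by decide
  add_zero := by decide
  add_comm := by decide
  nsmul := nsmulRec

@[simp] lemma K4.zero_a : (0 : K4).a = false := rfl
@[simp] lemma K4.zero_b : (0 : K4).b = false := rfl
@[simp] lemma K4.one_a : (1 : K4).a = true := rfl
@[simp] lemma K4.one_b : (1 : K4).b = false := rfl
@[simp] lemma K4.add_def (x y : K4) : x + y = ⟨xor x.a y.a, xor x.b y.b⟩ := rfl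
@[simp] lemma K4.mul_def (x y : K4) :
    x * y = ⟨xor (x.a && y.a) (x.b && y.b), xor (xor (x.a && y.b) (x.b && y.a)) (x.b && y.b)⟩ := rfl

-- ====== basic facts about F4 ======
noncomputable instance : Fintype F4 := Fintype.ofFinite _

lemma hF4card : Fintype.card F4 = 4 := by
  have h := GaloisField.card 2 2 (by norm_num)
  rw [Nat.card_eq_fintype_card] at h
  simpa using h

lemma addSelf (x : F4) : x + x = 0 := by
  have h : (2 : F4) = 0 := by
    have := CharP.cast_eq_zero F4 2
    exact_mod_cast this
  calc x + x = 2 * x := by ring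
  _ = 0 := by rw [h, zero_mul]

lemma pow4 (x : F4) : x ^ 4 = x := by
  have := FiniteField.pow_card x
  rwa [hF4card] at this

lemma cube_eq_one {x : F4} (hx : x ≠ 0) : x ^ 3 = 1 := by
  have := FiniteField.pow_card_sub_one_eq_one x hx
  rw [hF4card] at this
  norm_num at this
  exact this

lemma idem01 {u : F4} (h : u + u * u = 0) : u = 0 ∨ u = 1 := by
  have h2 : u * (1 + u) = 0 := by linear_combination (h)
  rcases mul_eq_zero.mp h2 with h3 | h3
  · exact Or.inl h3
  · exact Or.inr (by linear_combination (h3) - (addSelf 1))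

lemma exists_om : ∃ w : F4, w * w + w + 1 = 0 := by
  have hex : ∃ a : F4, a ≠ 0 ∧ a ≠ 1 := by
    by_contra hno
    push_neg at hno
    have hsub : (Finset.univ : Finset F4) ⊆ {0, 1} := by
      intro a _
      simp only [Finset.mem_insert, Finset.mem_singleton]
      by_cases h0 : a = 0
      · exact Or.inl h0
      · exact Or.inr (hno a h0)
    have hle : Fintype.card F4 ≤ ({0, 1} : Finset F4).card := by
      rw [← Finset.card_univ]; exact Finset.card_le_card hsub
    have hle2 : ({0, 1} : Finset F4).card ≤ 2 :=
      (Finset.card_insert_le _ _).trans (by simp)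
    rw [hF4card] at hle
    omega
  obtain ⟨a, ha0, ha1⟩ := hex
  have h3 : a ^ 3 = 1 := cube_eq_one ha0
  refine ⟨a, ?_⟩
  have : (a - 1) * (a * a + a + 1) = 0 := by
    have : (a - 1) * (a * a + a + 1) = a ^ 3 - 1 := by ring
    rw [this, h3, sub_self]
  rcases mul_eq_zero.mp this with h | h
  · exact absurd (by linear_combination (h)) ha1
  · exact h

noncomputable def om : F4 := Classical.choose exists_om

lemma hom : om * om + om + 1 = 0 := Classical.choose_spec exists_om

lemma om_ne0 : om ≠ (0 : F4) := by
  intro h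
  have h1 := hom
  rw [h] at h1
  simp at h1

lemma om_ne1 : om ≠ (1 : F4) := by
  intro h
  have h1 := hom
  rw [h] at h1
  exact one_ne_zero (by linear_combination (h1) - (addSelf 1))

-- ====== the bridge eK : K4 → F4 ======
noncomputable def eK : K4 → F4 := fun x => (if x.a then 1 else 0) + (if x.b then om else 0)

lemma eK_zero : eK 0 = 0 := by simp [eK]

lemma eK_eq_zero {x : K4} (h : eK x = 0) : x = 0 := by
  rcases x with ⟨xa, xb⟩
  cases xa <;> cases xb <;>
    first
      | rfl
      | (exfalso
         simp [eK] at h <;>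
           first
             | exact om_ne0 h
             | exact one_ne_zero h
             | exact om_ne1 (by linear_combination (h) - (addSelf 1)))

lemma eK_add (x y : K4) : eK (x + y) = eK x + eK y := by
  rcases x with ⟨xa, xb⟩
  rcases y with ⟨ya, yb⟩
  cases xa <;> cases xb <;> cases ya <;> cases yb <;>
    simp [eK] <;>
    first
      | ring1
      | linear_combination (addSelf 1)
      | linear_combination (addSelf om)
      | linear_combination (addSelf (1 + om))
      | linear_combination (addSelf 0) - (addSelf 1)
      | linear_combination (addSelf 0) - (addSelf om)
      | linear_combination (addSelf 0) - (addSelf (1 + om))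

lemma eK_mul (x y : K4) : eK (x * y) = eK x * eK y := by
  rcases x with ⟨xa, xb⟩
  rcases y with ⟨ya, yb⟩
  cases xa <;> cases xb <;> cases ya <;> cases yb <;>
    simp [eK] <;>
    first
      | ring1
      | linear_combination (hom)
      | linear_combination (addSelf 0) - (hom)
      | linear_combination (hom) - (addSelf 1)
      | linear_combination (addSelf 1) - (hom)
      | linear_combination (hom) - (addSelf om)
      | linear_combination (addSelf om) - (hom)
      | linear_combination (hom) - (addSelf (1 + om))
      | linear_combination (addSelf (1 + om)) - (hom)
      | linear_combination (hom) - (addSelf (om * om))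
      | linear_combination (addSelf (om * om)) - (hom)

lemma eK_inj : Function.Injective eK := by
  intro x y h
  have h2 : eK (x + y) = 0 := by
    rw [eK_add, h]
    exact addSelf _
  have h3 : x + y = 0 := eK_eq_zero h2
  have : ∀ a b : K4, a + b = 0 → a = b := by decide
  exact this x y h3

lemma eK_bij : Function.Bijective eK := by
  rw [Fintype.bijective_iff_injective_and_card]
  exact ⟨eK_inj, by rw [hF4card]; decide⟩

noncomputable def E4 : K4 ≃ F4 := Equiv.ofBijective eK eK_bij

lemma E4_apply (x : K4) : E4 x = eK x := rfl

lemma eK_symm (z : F4) : eK (E4.symm z) = z := E4.apply_symm_apply z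

-- ====== K4-side machinery ======
def wtK {n : ℕ} (x : Fin n → K4) : ℕ := (Finset.univ.filter (fun i => x i ≠ 0)).card

def hermK {n : ℕ} (x y : Fin n → K4) : K4 := ∑ i, x i * (y i * y i)

def tv (t : K4 × K4 × K4) : Fin 3 → K4 := ![t.1, t.2.1, t.2.2]

def phiK {n : ℕ} (M : Fin 3 → Fin n → K4) (t : K4 × K4 × K4) : Fin n → K4 :=
  fun j => t.1 * M 0 j + t.2.1 * M 1 j + t.2.2 * M 2 j

noncomputable def eKhom : K4 →+ F4 :=
  { toFun := eK, map_zero' := eK_zero, map_add' := eK_add }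

lemma eK_sum {ι : Type*} (s : Finset ι) (f : ι → K4) :
    eK (∑ i ∈ s, f i) = ∑ i ∈ s, eK (f i) := map_sum eKhom f s

noncomputable def phiF {n : ℕ} (g : Fin 3 → Fin n → F4) (y : Fin 3 → F4) : Fin n → F4 :=
  fun j => y 0 * g 0 j + y 1 * g 1 j + y 2 * g 2 j

lemma wt_transport {n : ℕ} (x : Fin n → K4) : wt (fun j => eK (x j)) = wtK x := by
  unfold wt wtK
  congr 1
  ext j
  simp only [Finset.mem_filter, Finset.mem_univ, true_and]
  constructor
  · intro h hx; exact h (by rw [hx, eK_zero])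
  · intro h hx; exact h (eK_inj (by rw [hx, eK_zero]))

lemma herm_transport {n : ℕ} (x y : Fin n → K4) :
    hermInner (fun j => eK (x j)) (fun j => eK (y j)) = eK (hermK x y) := by
  unfold hermInner hermK
  rw [eK_sum]
  apply Finset.sum_congr rfl
  intro i _
  rw [eK_mul, eK_mul, pow_two]

lemma tv_recon (y : Fin 3 → F4) :
    (fun k => eK (tv (E4.symm (y 0), E4.symm (y 1), E4.symm (y 2)) k)) = y := by
  funext k
  fin_cases k <;> simp [tv, eK_symm]

lemma phiF_transport {n : ℕ} (M : Fin 3 → Fin n → K4) (t : K4 × K4 × K4) :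
    phiF (fun k j => eK (M k j)) (fun k => eK (tv t k)) = fun j => eK (phiK M t j) := by
  funext j
  unfold phiF phiK tv
  simp only [Matrix.cons_val_zero, Matrix.cons_val_one, Matrix.head_cons, Matrix.cons_val_two,
    Matrix.tail_cons]
  rw [eK_add, eK_add, eK_mul, eK_mul, eK_mul]

lemma card_transport (p : (Fin 3 → F4) → Prop) (q : K4 × K4 × K4 → Prop)
    (h : ∀ t, p (fun k => eK (tv t k)) ↔ q t) :
    (Finset.univ.filter p).card = (Finset.univ.filter q).card := by
  apply Finset.card_bij' (fun y _ => (E4.symm (y 0), E4.symm (y 1), E4.symm (y 2)))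
    (fun t _ => (fun k => eK (tv t k)))
  · intro y hy
    simp only [Finset.mem_filter, Finset.mem_univ, true_and] at hy ⊢
    exact (h _).mp (by rw [tv_recon]; exact hy)
  · intro t ht
    simp only [Finset.mem_filter, Finset.mem_univ, true_and] at ht ⊢
    exact (h t).mpr ht
  · intro y _
    rw [tv_recon]
  · intro t _
    refine Prod.ext (E4.symm_apply_apply _) (Prod.ext (E4.symm_apply_apply _) (E4.symm_apply_apply _))

lemma card64F4 : Fintype.card (Fin 3 → F4) = 64 := by
  rw [Fintype.card_fun, hF4card, Fintype.card_fin]; norm_num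

-- ====== decide facts over K4 and their F4 versions ======
set_option maxRecDepth 40000

lemma K_cube28 : ((Finset.univ : Finset (K4 × K4 × K4)).filter
    (fun t => t.1 * t.1 * t.1 + t.2.1 * t.2.1 * t.2.1 + t.2.2 * t.2.2 * t.2.2 = 0)).card = 28 := by
  decide

lemma K_ker16 : ∀ u : K4 × K4 × K4, u ≠ 0 →
    ((Finset.univ : Finset (K4 × K4 × K4)).filter
      (fun t => t.1 * u.1 + t.2.1 * u.2.1 + t.2.2 * u.2.2 = 0)).card = 16 := by
  decide

lemma card_filter_irrel {α : Type*} (p : α → Prop) (s : Finset α)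
    (h1 h2 : DecidablePred p) :
    (@Finset.filter α p h1 s).card = (@Finset.filter α p h2 s).card := by
  have h : h1 = h2 := Subsingleton.elim _ _
  subst h; rfl

lemma eK_cube (a : K4) : (eK a) ^ 3 = eK (a * a * a) := by
  rw [show (3 : ℕ) = 2 + 1 from rfl, pow_succ, pow_two, ← eK_mul, ← eK_mul]

lemma cube28F4 : ((Finset.univ : Finset (Fin 3 → F4)).filter
    (fun y => y 0 ^ 3 + y 1 ^ 3 + y 2 ^ 3 = 0)).card = 28 := by
  have hq : ∀ t : K4 × K4 × K4,
      ((fun y : Fin 3 → F4 => y 0 ^ 3 + y 1 ^ 3 + y 2 ^ 3 = 0) (fun k => eK (tv t k)) ↔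
        (t.1 * t.1 * t.1 + t.2.1 * t.2.1 * t.2.1 + t.2.2 * t.2.2 * t.2.2 = 0)) := by
    intro t
    simp only [tv, Matrix.cons_val_zero, Matrix.cons_val_one, Matrix.head_cons,
      Matrix.cons_val_two, Matrix.tail_cons]
    rw [eK_cube, eK_cube, eK_cube, ← eK_add, ← eK_add]
    constructor
    · exact eK_eq_zero
    · intro h; rw [h, eK_zero]
  rw [card_transport _ _ hq]
  exact (card_filter_irrel _ _ _ _).trans K_cube28

lemma ker16F4 : ∀ h : Fin 3 → F4, h ≠ 0 →
    ((Finset.univ : Finset (Fin 3 → F4)).filter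
      (fun y => y 0 * h 0 + y 1 * h 1 + y 2 * h 2 = 0)).card = 16 := by
  intro h hne
  set u : K4 × K4 × K4 := (E4.symm (h 0), E4.symm (h 1), E4.symm (h 2)) with hu
  have hval : ∀ k : Fin 3, h k = eK (tv u k) := by
    intro k; fin_cases k <;> simp [hu, tv, eK_symm]
  have hune : u ≠ 0 := by
    intro h0
    apply hne
    funext k
    rw [hval k, h0]
    fin_cases k <;> simp [tv, eK_zero]
  have hq : ∀ t : K4 × K4 × K4,
      ((fun y : Fin 3 → F4 => y 0 * h 0 + y 1 * h 1 + y 2 * h 2 = 0) (fun k => eK (tv t k)) ↔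
        (t.1 * u.1 + t.2.1 * u.2.1 + t.2.2 * u.2.2 = 0)) := by
    intro t
    rw [show h 0 = eK u.1 from hval 0, show h 1 = eK u.2.1 from hval 1,
      show h 2 = eK u.2.2 from hval 2]
    simp only [tv, Matrix.cons_val_zero, Matrix.cons_val_one, Matrix.head_cons,
      Matrix.cons_val_two, Matrix.tail_cons]
    rw [← eK_mul, ← eK_mul, ← eK_mul, ← eK_add, ← eK_add]
    constructor
    · exact eK_eq_zero
    · intro h2; rw [h2, eK_zero]
  rw [card_transport _ _ hq]
  exact (card_filter_irrel _ _ _ _).trans (K_ker16 u hune)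

-- ====== concrete matrices over K4 ======
def k0 : K4 := ⟨false, false⟩
def k1 : K4 := ⟨true, false⟩
def kw : K4 := ⟨false, true⟩
def kz : K4 := ⟨true, true⟩

def B11r0 : Fin 11 → K4 := ![k1,k1,k0,k1,k1,k0,k1,k0,k1,k0,k1]
def B11r1 : Fin 11 → K4 := ![kz,kw,k1,kz,kz,k1,k1,k1,kw,k1,k1]
def B11r2 : Fin 11 → K4 := ![kw,kw,kz,k1,k0,kw,k1,k0,k0,k1,kz]
def B11 : Fin 3 → Fin 11 → K4 := ![B11r0, B11r1, B11r2]
def B16r0 : Fin 16 → K4 := ![k1,k0,k1,k1,k1,k0,k1,k1,k0,k1,k1,k1,k1,k1,k1,k0]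
def B16r1 : Fin 16 → K4 := ![kz,k0,k0,k0,kw,k1,k1,kw,k1,k0,k1,k0,kw,k1,kz,k1]
def B16r2 : Fin 16 → K4 := ![kw,k1,kz,kw,kz,kw,kz,k0,kz,kw,kw,k1,k1,k0,k1,kz]
def B16 : Fin 3 → Fin 16 → K4 := ![B16r0, B16r1, B16r2]
def B20r0 : Fin 20 → K4 := ![k1,k1,k1,k1,k1,k1,k1,k1,k1,k1,k1,k1,k1,k1,k1,k1,k1,k1,k0,k1]
def B20r1 : Fin 20 → K4 := ![kz,kw,kw,k1,k1,kz,kz,kw,kw,kz,kw,kw,k0,k0,k1,k1,kz,kz,k1,k1]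
def B20r2 : Fin 20 → K4 := ![kw,kz,k0,k1,k1,kz,k1,kw,kw,k0,k0,k1,k1,k0,k0,kw,k1,kw,kz,kz]
def B20 : Fin 3 → Fin 20 → K4 := ![B20r0, B20r1, B20r2]
def SKr0 : Fin 21 → K4 := ![k0,k0,k0,k0,k0,k1,k1,k1,k1,k1,k1,k1,k1,k1,k1,k1,k1,k1,k1,k1,k1]
def SKr1 : Fin 21 → K4 := ![k0,k1,k1,k1,k1,k0,k0,k0,k0,k1,k1,k1,k1,kw,kw,kw,kw,kz,kz,kz,kz]
def SKr2 : Fin 21 → K4 := ![k1,k0,k1,kw,kz,k0,k1,kw,kz,k0,k1,kw,kz,k0,k1,kw,kz,k0,k1,kw,kz]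
def SK : Fin 3 → Fin 21 → K4 := ![SKr0, SKr1, SKr2]

lemma KB11w : ∀ t : K4 × K4 × K4, t ≠ 0 → 7 ≤ wtK (phiK B11 t) := by decide
lemma KB11e : ∃ t : K4 × K4 × K4, t ≠ 0 ∧ wtK (phiK B11 t) = 7 := by decide
lemma KB11g : ∀ t : K4 × K4 × K4, (∀ i : Fin 3, hermK (phiK B11 t) (B11 i) = 0) → t = 0 := by decide
lemma KB16w : ∀ t : K4 × K4 × K4, t ≠ 0 → 11 ≤ wtK (phiK B16 t) := by decide
lemma KB16e : ∃ t : K4 × K4 × K4, t ≠ 0 ∧ wtK (phiK B16 t) = 11 := by decide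
lemma KB16g : ∀ t : K4 × K4 × K4, (∀ i : Fin 3, hermK (phiK B16 t) (B16 i) = 0) → t = 0 := by decide
lemma KB20w : ∀ t : K4 × K4 × K4, t ≠ 0 → 14 ≤ wtK (phiK B20 t) := by decide
lemma KB20e : ∃ t : K4 × K4 × K4, t ≠ 0 ∧ wtK (phiK B20 t) = 14 := by decide
lemma KB20g : ∀ t : K4 × K4 × K4, (∀ i : Fin 3, hermK (phiK B20 t) (B20 i) = 0) → t = 0 := by decide
lemma KSw : ∀ t : K4 × K4 × K4, t ≠ 0 → wtK (phiK SK t) = 16 := by decide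
lemma KSg : ∀ (t : K4 × K4 × K4) (i : Fin 3), hermK (phiK SK t) (SK i) = 0 := by decide

-- ====== transport of generator facts to F4 ======
lemma tv_zero : ∀ k : Fin 3, tv (0 : K4 × K4 × K4) k = 0 := by
  intro k; fin_cases k <;> simp [tv]

lemma exists_t (y : Fin 3 → F4) :
    ∃ t : K4 × K4 × K4, (fun k => eK (tv t k)) = y ∧ (y = 0 ↔ t = 0) := by
  refine ⟨(E4.symm (y 0), E4.symm (y 1), E4.symm (y 2)), tv_recon y, ?_, ?_⟩
  · intro h0
    have h1 : ∀ k : Fin 3, y k = 0 := fun k => by rw [h0]; rfl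
    refine Prod.ext ?_ (Prod.ext ?_ ?_) <;>
      · show E4.symm _ = (0 : K4)
        rw [show (0 : K4) = E4.symm (eK 0) from (E4.symm_apply_apply 0).symm, eK_zero]
        simp [h1]
  · intro h0
    funext k
    rw [← tv_recon y]
    simp only [h0]
    rw [tv_zero k, eK_zero]
    rfl

def goodGen (n d : ℕ) : Prop :=
  ∃ g : Fin 3 → Fin n → F4,
    (∀ y : Fin 3 → F4, y ≠ 0 → d ≤ wt (phiF g y)) ∧
    (∃ y : Fin 3 → F4, y ≠ 0 ∧ wt (phiF g y) = d) ∧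
    (∀ y : Fin 3 → F4, (∀ i, hermInner (phiF g y) (g i) = 0) → y = 0)

lemma goodGen_of_K {n d : ℕ} (M : Fin 3 → Fin n → K4)
    (h1 : ∀ t : K4 × K4 × K4, t ≠ 0 → d ≤ wtK (phiK M t))
    (h2 : ∃ t : K4 × K4 × K4, t ≠ 0 ∧ wtK (phiK M t) = d)
    (h3 : ∀ t : K4 × K4 × K4, (∀ i : Fin 3, hermK (phiK M t) (M i) = 0) → t = 0) :
    goodGen n d := by
  refine ⟨fun k j => eK (M k j), ?_, ?_, ?_⟩
  · intro y hy
    obtain ⟨t, ht, hiff⟩ := exists_t y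
    have hphi : phiF (fun k j => eK (M k j)) y = fun j => eK (phiK M t j) := by
      rw [← ht, phiF_transport]
    rw [hphi, show (fun j => eK (phiK M t j)) = (fun j => eK ((phiK M t) j)) from rfl,
      wt_transport]
    exact h1 t (fun h0 => hy (hiff.mpr h0))
  · obtain ⟨t, htne, htw⟩ := h2
    refine ⟨fun k => eK (tv t k), ?_, ?_⟩
    · intro h0
      apply htne
      have hc : ∀ k : Fin 3, tv t k = 0 := fun k => eK_eq_zero (congrFun h0 k)
      refine Prod.ext ?_ (Prod.ext ?_ ?_)
      · simpa [tv] using hc 0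
      · simpa [tv] using hc 1
      · simpa [tv] using hc 2
    · rw [phiF_transport, wt_transport]
      exact htw
  · intro y hherm
    obtain ⟨t, ht, hiff⟩ := exists_t y
    apply hiff.mpr
    apply h3
    intro i
    have hphi : phiF (fun k j => eK (M k j)) y = fun j => eK (phiK M t j) := by
      rw [← ht, phiF_transport]
    have := hherm i
    rw [hphi] at this
    have h4 := herm_transport (phiK M t) (M i)
    rw [show ((fun k j => eK (M k j)) i) = (fun j => eK (M i j)) from rfl] at this
    rw [this] at h4
    exact (eK_eq_zero h4.symm)

-- ====== appending the simplex block ======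
lemma wt_append {m n : ℕ} (u : Fin m → F4) (v : Fin n → F4) :
    wt (Fin.append u v) = wt u + wt v := by
  unfold wt
  rw [Finset.card_filter, Finset.card_filter, Finset.card_filter, Fin.sum_univ_add]
  simp [Fin.append_left, Fin.append_right]

lemma herm_append {m n : ℕ} (x u : Fin m → F4) (y v : Fin n → F4) :
    hermInner (Fin.append x y) (Fin.append u v) = hermInner x u + hermInner y v := by
  unfold hermInner
  rw [Fin.sum_univ_add]
  simp [Fin.append_left, Fin.append_right]

lemma phiF_append {m n : ℕ} (g : Fin 3 → Fin m → F4) (h : Fin 3 → Fin n → F4)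
    (y : Fin 3 → F4) :
    phiF (fun k => Fin.append (g k) (h k)) y = Fin.append (phiF g y) (phiF h y) := by
  funext j
  refine Fin.addCases (motive := fun j =>
      phiF (fun k => Fin.append (g k) (h k)) y j = Fin.append (phiF g y) (phiF h y) j)
    (fun i => ?_) (fun i => ?_) j
  · simp [phiF, Fin.append_left]
  · simp [phiF, Fin.append_right]

noncomputable def Sf : Fin 3 → Fin 21 → F4 := fun k j => eK (SK k j)

lemma Sf_wt : ∀ y : Fin 3 → F4, y ≠ 0 → wt (phiF Sf y) = 16 := by
  intro y hy
  obtain ⟨t, ht, hiff⟩ := exists_t y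
  have hphi : phiF Sf y = fun j => eK (phiK SK t j) := by
    rw [← ht]; exact phiF_transport SK t
  rw [hphi, show (fun j => eK (phiK SK t j)) = (fun j => eK ((phiK SK t) j)) from rfl,
    wt_transport]
  exact KSw t (fun h0 => hy (hiff.mpr h0))

lemma Sf_herm : ∀ (y : Fin 3 → F4) (i : Fin 3), hermInner (phiF Sf y) (Sf i) = 0 := by
  intro y i
  obtain ⟨t, ht, hiff⟩ := exists_t y
  have hphi : phiF Sf y = fun j => eK (phiK SK t j) := by
    rw [← ht]; exact phiF_transport SK t
  rw [hphi, show Sf i = fun j => eK (SK i j) from rfl, herm_transport, KSg t i, eK_zero]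

lemma goodGen_step {n d : ℕ} (h : goodGen n d) : goodGen (n + 21) (d + 16) := by
  obtain ⟨g, hlb, ⟨y₀, hy₀, hw₀⟩, hlcd⟩ := h
  refine ⟨fun k => Fin.append (g k) (Sf k), ?_, ⟨y₀, hy₀, ?_⟩, ?_⟩
  · intro y hy
    rw [phiF_append, wt_append, Sf_wt y hy]
    exact Nat.add_le_add (hlb y hy) le_rfl
  · rw [phiF_append, wt_append, Sf_wt y₀ hy₀, hw₀]
  · intro y hherm
    apply hlcd
    intro i
    have := hherm i
    rw [phiF_append, show (fun k => Fin.append (g k) (Sf k)) i = Fin.append (g i) (Sf i)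
      from rfl, herm_append, Sf_herm y i, add_zero] at this
    exact this

-- ====== from goodGen to an LCD code ======
lemma wt_zero {n : ℕ} : wt (0 : Fin n → F4) = 0 := by
  unfold wt
  simp

lemma exists_code {n d : ℕ} (hd : 1 ≤ d) (h : goodGen n d) :
    ∃ C : Submodule F4 (Fin n → F4), IsHermLCDCode n 3 d C := by
  obtain ⟨g, hlb, ⟨y₀, hy₀, hw₀⟩, hlcd⟩ := h
  set Φ : (Fin 3 → F4) →ₗ[F4] (Fin n → F4) :=
    { toFun := phiF g
      map_add' := by
        intro y z
        funext j
        simp only [phiF, Pi.add_apply]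
        ring
      map_smul' := by
        intro a y
        funext j
        simp only [phiF, Pi.smul_apply, smul_eq_mul, RingHom.id_apply]
        ring } with hΦ
  have hΦ0 : ∀ y, Φ y = 0 → y = 0 := by
    intro y h0
    by_contra hne
    have := hlb y hne
    rw [show phiF g y = Φ y from rfl, h0, wt_zero] at this
    omega
  have hΦinj : Function.Injective Φ := by
    intro y z hyz
    have : Φ (y - z) = 0 := by rw [map_sub, hyz, sub_self]
    have := hΦ0 _ this
    exact sub_eq_zero.mp this
  refine ⟨LinearMap.range Φ, ?_, ?_, ?_⟩
  · rw [← (LinearEquiv.ofInjective Φ hΦinj).finrank_eq]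
    rw [Module.finrank_fintype_fun_eq_card, Fintype.card_fin]
  · intro x hx hdual
    obtain ⟨y, rfl⟩ := hx
    have hgen : ∀ i : Fin 3, g i ∈ LinearMap.range Φ := by
      intro i
      refine ⟨Pi.single i 1, ?_⟩
      funext j
      show phiF g (Pi.single i 1) j = g i j
      fin_cases i <;>
        simp [phiF, Pi.single_apply] <;> ring
    have : ∀ i : Fin 3, hermInner (phiF g y) (g i) = 0 := by
      intro i
      exact hdual (g i) (hgen i)
    rw [hlcd y this]
    exact map_zero Φ
  · constructor
    · exact ⟨Φ y₀, ⟨y₀, rfl⟩, by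
        intro h0
        exact hy₀ (hΦ0 y₀ h0), hw₀⟩
    · rintro x ⟨y, rfl⟩ hxne
      apply hlb
      intro h0
      exact hxne (by rw [h0, map_zero])

-- ====== Hermitian form algebra ======
lemma herm_add_left {n : ℕ} (x x' y : Fin n → F4) :
    hermInner (x + x') y = hermInner x y + hermInner x' y := by
  unfold hermInner
  rw [← Finset.sum_add_distrib]
  apply Finset.sum_congr rfl
  intro i _
  simp [add_mul]

lemma herm_smul_left {n : ℕ} (a : F4) (x y : Fin n → F4) :
    hermInner (a • x) y = a * hermInner x y := by
  unfold hermInner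
  rw [Finset.mul_sum]
  apply Finset.sum_congr rfl
  intro i _
  simp only [Pi.smul_apply, smul_eq_mul]
  ring

lemma sq_add (a b : F4) : (a + b) ^ 2 = a ^ 2 + b ^ 2 := by
  linear_combination (addSelf (a * b))

lemma sq_sum {ι : Type*} (s : Finset ι) (f : ι → F4) :
    (∑ i ∈ s, f i) ^ 2 = ∑ i ∈ s, (f i) ^ 2 := by
  induction s using Finset.cons_induction with
  | empty => simp
  | cons a s ha ih =>
    rw [Finset.sum_cons, Finset.sum_cons, sq_add, ih]

lemma herm_conj {n : ℕ} (x y : Fin n → F4) : hermInner y x = (hermInner x y) ^ 2 := by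
  unfold hermInner
  rw [sq_sum]
  apply Finset.sum_congr rfl
  intro i _
  have h4 := pow4 (y i)
  calc y i * x i ^ 2 = x i ^ 2 * y i ^ 4 := by rw [h4]; ring
  _ = (x i * y i ^ 2) ^ 2 := by ring

lemma herm_self {n : ℕ} (x : Fin n → F4) : hermInner x x = ((wt x : ℕ) : F4) := by
  unfold hermInner wt
  rw [← Finset.sum_boole]
  apply Finset.sum_congr rfl
  intro i _
  by_cases h : x i = 0
  · simp [h]
  · rw [if_pos h]
    calc x i * x i ^ 2 = x i ^ 3 := by ring
    _ = 1 := cube_eq_one h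

-- ====== isotropic count for a nondegenerate Hermitian form on F4^3 ======
lemma isoCount (B : (Fin 3 → F4) → (Fin 3 → F4) → F4)
    (hadd : ∀ x y z, B (x + y) z = B x z + B y z)
    (hsmul : ∀ (a : F4) (x z : Fin 3 → F4), B (a • x) z = a * B x z)
    (hconj : ∀ x y, B y x = (B x y) ^ 2)
    (hnd : ∀ y, (∀ z, B y z = 0) → y = 0) :
    ((Finset.univ : Finset (Fin 3 → F4)).filter (fun y => B y y = 0)).card = 28 := by
  have haddr : ∀ x y z, B x (y + z) = B x y + B x z := by
    intro x y z
    rw [hconj (y + z) x, hadd, sq_add, ← hconj y x, ← hconj z x]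
  have hsmulr : ∀ (a : F4) (x z : Fin 3 → F4), B x (a • z) = a ^ 2 * B x z := by
    intro a x z
    rw [hconj (a • z) x, hsmul, mul_pow, ← hconj z x]
  have hnorm : ∀ v, B v v ≠ 0 → B v v = 1 := by
    intro v hv
    have h := hconj v v
    rcases idem01 (u := B v v) (by linear_combination (addSelf (B v v)) - (h)) with h0 | h1
    · exact absurd h0 hv
    · exact h1
  -- generic orthogonality propagation on isotropic "subspaces"
  have keyorth : ∀ (P : (Fin 3 → F4) → Prop),
      (∀ y z, P y → P z → P (y + z)) →
      (∀ y, P y → P (om • y)) →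
      (∀ y, P y → B y y = 0) →
      (∀ y z, P y → P z → B y z = 0) := by
    intro P hPadd hPsm hPiso y z hy hz
    have e1 : B y z + (B y z) ^ 2 = 0 := by
      have h := hPiso _ (hPadd y z hy hz)
      rw [hadd, haddr, haddr, hPiso y hy, hPiso z hz, hconj y z] at h
      linear_combination (h)
    have e2 : om * B y z + (om * B y z) ^ 2 = 0 := by
      have h := hPiso _ (hPadd _ z (hPsm y hy) hz)
      rw [hadd, haddr, haddr, hsmul, hsmul, hsmulr, hsmulr, hPiso y hy, hPiso z hz,
        hconj y z] at h
      linear_combination (h)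
    rcases idem01 (u := B y z) (by linear_combination (e1)) with h0 | h1
    · exact h0
    · exfalso
      rw [h1, mul_one] at e2
      rcases idem01 (u := om) (by linear_combination (e2)) with h2 | h2
      · exact om_ne0 h2
      · exact om_ne1 h2
  -- step 1 : an anisotropic vector exists
  have hexv1 : ∃ v, B v v ≠ 0 := by
    by_contra hno
    push_neg at hno
    have hall := keyorth (fun _ => True) (fun _ _ _ _ => trivial) (fun _ _ => trivial)
      (fun y _ => hno y)
    have h1 := hnd (Pi.single 0 1) (fun z => hall _ z trivial trivial)
    have h2 := congrFun h1 0
    rw [Pi.single_eq_same] at h2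
    exact one_ne_zero h2
  obtain ⟨v1, hv1a⟩ := hexv1
  have hv11 : B v1 v1 = 1 := hnorm v1 hv1a
  -- a subtraction lemma
  have hsub : ∀ x y z, B (x - y) z = B x z - B y z := by
    intro x y z
    rw [sub_eq_add_neg, ← neg_one_smul F4 y, hadd, hsmul]
    ring
  -- step 2 : an anisotropic vector orthogonal to v1
  have hexv2 : ∃ w, B w v1 = 0 ∧ B w w ≠ 0 := by
    by_contra hno
    push_neg at hno
    have horth := keyorth (fun w => B w v1 = 0)
      (fun y z hy hz => by
        have hy' : B y v1 = 0 := hy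
        have hz' : B z v1 = 0 := hz
        show B (y + z) v1 = 0
        rw [hadd, hy', hz', add_zero])
      (fun y hy => by
        have hy' : B y v1 = 0 := hy
        show B (om • y) v1 = 0
        rw [hsmul, hy', mul_zero])
      hno
    have hcard : Fintype.card F4 < Fintype.card (Fin 3 → F4) := by
      rw [hF4card, card64F4]; omega
    obtain ⟨y1, y2, hne, heq⟩ :=
      Fintype.exists_ne_map_eq_of_card_lt (fun y : Fin 3 → F4 => B y v1) hcard
    set w0 := y1 - y2 with hw0
    have hw0v1 : B w0 v1 = 0 := by rw [hw0, hsub, heq, sub_self]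
    have hw0ne : w0 ≠ 0 := sub_ne_zero.mpr hne
    have hzero : ∀ z, B w0 z = 0 := by
      intro z
      have hw' : B (z - B z v1 • v1) v1 = 0 := by
        rw [hsub, hsmul, hv11, mul_one, sub_self]
      calc B w0 z = B w0 ((z - B z v1 • v1) + B z v1 • v1) := by rw [sub_add_cancel]
      _ = B w0 (z - B z v1 • v1) + (B z v1) ^ 2 * B w0 v1 := by rw [haddr, hsmulr]
      _ = 0 := by rw [horth w0 _ hw0v1 hw', hw0v1, mul_zero, add_zero]
    exact hw0ne (hnd w0 hzero)
  obtain ⟨v2, hv21, hv2a⟩ := hexv2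
  have hv22 : B v2 v2 = 1 := hnorm v2 hv2a
  have hv12 : B v1 v2 = 0 := by rw [hconj v2 v1, hv21]; ring
  -- step 3 : an anisotropic vector orthogonal to v1 and v2
  have hexv3 : ∃ w, (B w v1 = 0 ∧ B w v2 = 0) ∧ B w w ≠ 0 := by
    by_contra hno
    push_neg at hno
    have horth := keyorth (fun w => B w v1 = 0 ∧ B w v2 = 0)
      (fun y z hy hz => by
        obtain ⟨hy1, hy2⟩ := hy
        obtain ⟨hz1, hz2⟩ := hz
        refine ⟨?_, ?_⟩
        · show B (y + z) v1 = 0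
          rw [hadd, hy1, hz1, add_zero]
        · show B (y + z) v2 = 0
          rw [hadd, hy2, hz2, add_zero])
      (fun y hy => by
        obtain ⟨hy1, hy2⟩ := hy
        refine ⟨?_, ?_⟩
        · show B (om • y) v1 = 0
          rw [hsmul, hy1, mul_zero]
        · show B (om • y) v2 = 0
          rw [hsmul, hy2, mul_zero])
      (fun y hy => hno y hy)
    have hcard : Fintype.card (F4 × F4) < Fintype.card (Fin 3 → F4) := by
      rw [Fintype.card_prod, hF4card, card64F4]; omega
    obtain ⟨y1, y2, hne, heq⟩ :=
      Fintype.exists_ne_map_eq_of_card_lt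
        (fun y : Fin 3 → F4 => (B y v1, B y v2)) hcard
    set w0 := y1 - y2 with hw0
    have heq1 : B y1 v1 = B y2 v1 := congrArg Prod.fst heq
    have heq2 : B y1 v2 = B y2 v2 := congrArg Prod.snd heq
    have hw0v1 : B w0 v1 = 0 := by rw [hw0, hsub, heq1, sub_self]
    have hw0v2 : B w0 v2 = 0 := by rw [hw0, hsub, heq2, sub_self]
    have hw0ne : w0 ≠ 0 := sub_ne_zero.mpr hne
    have hzero : ∀ z, B w0 z = 0 := by
      intro z
      set w' := z - B z v1 • v1 - B z v2 • v2 with hw'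
      have hw'1 : B w' v1 = 0 := by
        rw [hw', hsub, hsub, hsmul, hsmul, hv11, hv21]
        ring
      have hw'2 : B w' v2 = 0 := by
        rw [hw', hsub, hsub, hsmul, hsmul, hv12, hv22]
        ring
      calc B w0 z
          = B w0 (w' + B z v2 • v2 + B z v1 • v1) := by
            rw [hw', sub_add_cancel, sub_add_cancel]
      _ = B w0 w' + (B z v2) ^ 2 * B w0 v2 + (B z v1) ^ 2 * B w0 v1 := by
            rw [haddr, haddr, hsmulr, hsmulr]
      _ = 0 := by
            rw [horth w0 w' ⟨hw0v1, hw0v2⟩ ⟨hw'1, hw'2⟩, hw0v1, hw0v2]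
            ring
    exact hw0ne (hnd w0 hzero)
  obtain ⟨v3, ⟨hv31, hv32⟩, hv3a⟩ := hexv3
  have hv33 : B v3 v3 = 1 := hnorm v3 hv3a
  have hv13 : B v1 v3 = 0 := by rw [hconj v3 v1, hv31]; ring
  have hv23 : B v2 v3 = 0 := by rw [hconj v3 v2, hv32]; ring
  -- the orthonormal parametrization
  have hψ1 : ∀ a : Fin 3 → F4, B (a 0 • v1 + a 1 • v2 + a 2 • v3) v1 = a 0 := by
    intro a
    rw [hadd, hadd, hsmul, hsmul, hsmul, hv11, hv21, hv31]
    ring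
  have hψ2 : ∀ a : Fin 3 → F4, B (a 0 • v1 + a 1 • v2 + a 2 • v3) v2 = a 1 := by
    intro a
    rw [hadd, hadd, hsmul, hsmul, hsmul, hv12, hv22, hv32]
    ring
  have hψ3 : ∀ a : Fin 3 → F4, B (a 0 • v1 + a 1 • v2 + a 2 • v3) v3 = a 2 := by
    intro a
    rw [hadd, hadd, hsmul, hsmul, hsmul, hv13, hv23, hv33]
    ring
  have hψinj : Function.Injective
      (fun a : Fin 3 → F4 => a 0 • v1 + a 1 • v2 + a 2 • v3) := by
    intro a b h
    have h' : a 0 • v1 + a 1 • v2 + a 2 • v3 = b 0 • v1 + b 1 • v2 + b 2 • v3 := h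
    funext k
    fin_cases k
    · show a 0 = b 0
      rw [← hψ1 a, ← hψ1 b, h']
    · show a 1 = b 1
      rw [← hψ2 a, ← hψ2 b, h']
    · show a 2 = b 2
      rw [← hψ3 a, ← hψ3 b, h']
  have hψsurj : Function.Surjective
      (fun a : Fin 3 → F4 => a 0 • v1 + a 1 • v2 + a 2 • v3) :=
    (Finite.injective_iff_bijective.mp hψinj).2
  have hq : ∀ a : Fin 3 → F4,
      B (a 0 • v1 + a 1 • v2 + a 2 • v3) (a 0 • v1 + a 1 • v2 + a 2 • v3)
        = a 0 ^ 3 + a 1 ^ 3 + a 2 ^ 3 := by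
    intro a
    rw [hadd, hadd, haddr, haddr, haddr, haddr, haddr, haddr,
      hsmul, hsmul, hsmul, hsmul, hsmul, hsmul, hsmul, hsmul, hsmul,
      hsmulr, hsmulr, hsmulr, hsmulr, hsmulr, hsmulr, hsmulr, hsmulr, hsmulr,
      hv11, hv12, hv13, hv21, hv22, hv23, hv31, hv32, hv33]
    ring
  have hbij : ((Finset.univ : Finset (Fin 3 → F4)).filter
        (fun a => B (a 0 • v1 + a 1 • v2 + a 2 • v3)
          (a 0 • v1 + a 1 • v2 + a 2 • v3) = 0)).card
      = ((Finset.univ : Finset (Fin 3 → F4)).filter (fun y => B y y = 0)).card := by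
    apply Finset.card_bij (fun a _ => a 0 • v1 + a 1 • v2 + a 2 • v3)
    · intro a ha
      simp only [Finset.mem_filter, Finset.mem_univ, true_and] at ha ⊢
      exact ha
    · intro a1 h1 a2 h2 h
      exact hψinj h
    · intro y hy
      simp only [Finset.mem_filter, Finset.mem_univ, true_and] at hy
      obtain ⟨a, ha⟩ := hψsurj y
      refine ⟨a, Finset.mem_filter.mpr ⟨Finset.mem_univ a, ?_⟩, ha⟩
      simp only at ha
      rw [ha]
      exact hy
  calc ((Finset.univ : Finset (Fin 3 → F4)).filter (fun y => B y y = 0)).card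
      = ((Finset.univ : Finset (Fin 3 → F4)).filter
          (fun a => B (a 0 • v1 + a 1 • v2 + a 2 • v3)
            (a 0 • v1 + a 1 • v2 + a 2 • v3) = 0)).card := hbij.symm
  _ = ((Finset.univ : Finset (Fin 3 → F4)).filter
          (fun a => a 0 ^ 3 + a 1 ^ 3 + a 2 ^ 3 = 0)).card := by
        congr 1
        apply Finset.filter_congr
        intro a _
        rw [hq a]
  _ = 28 := cube28F4

-- ====== the upper bound ======
lemma upper_bound {n : ℕ} (C : Submodule F4 (Fin n → F4)) (h3 : Module.finrank F4 C = 3)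
    (hlcd : IsHermLCD C) {D : ℕ}
    (hmin : ∀ x ∈ C, x ≠ 0 → D ≤ wt x) :
    63 * D + 27 ≤ 48 * n ∧ (Even D → 63 * D + 36 ≤ 48 * n) := by
  classical
  let b : Module.Basis (Fin 3) F4 C := Module.finBasisOfFinrankEq F4 C h3
  set g : Fin 3 → (Fin n → F4) := fun k => (b k : Fin n → F4) with hg
  set φ : (Fin 3 → F4) → (Fin n → F4) := fun y => ∑ k, y k • g k with hφ
  have hmem : ∀ y, φ y ∈ C :=
    fun y => Submodule.sum_mem _ (fun k _ => Submodule.smul_mem _ _ (SetLike.coe_mem (b k)))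
  have hcoe : ∀ y, φ y = ((∑ k, y k • b k : C) : Fin n → F4) := by
    intro y
    rw [hφ]
    simp only [AddSubmonoidClass.coe_finset_sum, SetLike.val_smul, hg]
  have hφ0 : ∀ y, φ y = 0 → y = 0 := by
    intro y h0
    have hC0 : (∑ k, y k • b k : C) = 0 := by
      have hcc : ((∑ k, y k • b k : C) : Fin n → F4) = ((0 : C) : Fin n → F4) := by
        rw [← hcoe y, h0]
        rfl
      exact Subtype.coe_injective hcc
    have hz := Fintype.linearIndependent_iff.mp b.linearIndependent y hC0
    funext k
    exact hz k
  have hsurj : ∀ x ∈ C, ∃ y, φ y = x := by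
    intro x hx
    refine ⟨fun k => b.repr ⟨x, hx⟩ k, ?_⟩
    rw [hcoe]
    exact congrArg Subtype.val (b.sum_repr ⟨x, hx⟩)
  have hφadd : ∀ x y, φ (x + y) = φ x + φ y := by
    intro x y
    simp only [hφ, Pi.add_apply, add_smul, Finset.sum_add_distrib]
  have hφsmul : ∀ (a : F4) y, φ (a • y) = a • φ y := by
    intro a y
    simp only [hφ, Pi.smul_apply, smul_eq_mul, mul_smul]
    rw [← Finset.smul_sum]
  -- the count of even-weight parameters
  have h28 := isoCount (fun y z => hermInner (φ y) (φ z))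
    (fun x y z => by
      show hermInner (φ (x + y)) (φ z) = hermInner (φ x) (φ z) + hermInner (φ y) (φ z)
      rw [hφadd, herm_add_left])
    (fun a x z => by
      show hermInner (φ (a • x)) (φ z) = a * hermInner (φ x) (φ z)
      rw [hφsmul, herm_smul_left])
    (fun x y => herm_conj (φ x) (φ y))
    (fun y hy => by
      have hin : inHermDual C (φ y) := by
        intro c hc
        obtain ⟨z, rfl⟩ := hsurj c hc
        exact hy z
      exact hφ0 y (hlcd (φ y) (hmem y) hin))
  have hpred : ∀ y : Fin 3 → F4, (hermInner (φ y) (φ y) = 0 ↔ Even (wt (φ y))) := by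
    intro y
    rw [herm_self, CharP.cast_eq_zero_iff F4 2]
    exact (even_iff_two_dvd).symm
  have h0mem : (0 : Fin 3 → F4) ∈
      Finset.univ.filter (fun y : Fin 3 → F4 => hermInner (φ y) (φ y) = 0) := by
    simp only [Finset.mem_filter, Finset.mem_univ, true_and]
    have hz : φ 0 = 0 := by simp [hφ]
    rw [hz]
    simp [hermInner]
  have hE : (Finset.univ.filter
      (fun y : Fin 3 → F4 => y ≠ 0 ∧ Even (wt (φ y)))).card = 27 := by
    have hErase : Finset.univ.filter (fun y : Fin 3 → F4 => y ≠ 0 ∧ Even (wt (φ y)))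
        = (Finset.univ.filter (fun y : Fin 3 → F4 => hermInner (φ y) (φ y) = 0)).erase 0 := by
      ext y
      simp only [Finset.mem_filter, Finset.mem_univ, true_and, Finset.mem_erase]
      rw [hpred y]
    rw [hErase, Finset.card_erase_of_mem h0mem, h28]
  -- counting
  set T := Finset.univ.filter (fun y : Fin 3 → F4 => y ≠ 0) with hT
  have hTcard : T.card = 63 := by
    rw [hT, Finset.filter_ne', Finset.card_erase_of_mem (Finset.mem_univ 0),
      Finset.card_univ, card64F4]
  have hsplitE : (T.filter (fun y => Even (wt (φ y)))).card = 27 := by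
    rw [hT, Finset.filter_filter]
    exact hE
  have hsplitO : (T.filter (fun y => ¬ Even (wt (φ y)))).card = 36 := by
    have hs := Finset.card_filter_add_card_filter_not
      (s := T) (p := fun y => Even (wt (φ y)))
    omega
  have hWlow : ∀ y ∈ T, D ≤ wt (φ y) := by
    intro y hyT
    have hyne : y ≠ 0 := (Finset.mem_filter.mp hyT).2
    exact hmin (φ y) (hmem y) (fun h0 => hyne (hφ0 y h0))
  have hptw : ∀ (y : Fin 3 → F4) (j : Fin n),
      φ y j = y 0 * g 0 j + y 1 * g 1 j + y 2 * g 2 j := by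
    intro y j
    rw [hφ]
    simp only [Finset.sum_apply, Pi.smul_apply, smul_eq_mul, Fin.sum_univ_three]
  have hup : ∑ y ∈ T, wt (φ y) ≤ 48 * n := by
    calc ∑ y ∈ T, wt (φ y)
        = ∑ y ∈ T, ∑ j : Fin n, (if φ y j ≠ 0 then 1 else 0) := by
          apply Finset.sum_congr rfl
          intro y _
          exact Finset.card_filter _ _
    _ = ∑ j : Fin n, ∑ y ∈ T, (if φ y j ≠ 0 then 1 else 0) := Finset.sum_comm
    _ ≤ ∑ _j : Fin n, 48 := by
          apply Finset.sum_le_sum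
          intro j _
          rw [← Finset.card_filter]
          by_cases hcol : (fun k : Fin 3 => g k j) = 0
          · have hzz : ∀ y : Fin 3 → F4, φ y j = 0 := by
              intro y
              rw [hptw]
              have h0 : ∀ k : Fin 3, g k j = 0 := fun k => congrFun hcol k
              rw [h0 0, h0 1, h0 2]
              ring
            have hempty : T.filter (fun y => φ y j ≠ 0) = ∅ := by
              apply Finset.filter_eq_empty_iff.mpr
              intro y _
              simp [hzz y]
            rw [hempty]
            simp
          · set hv : Fin 3 → F4 := fun k => g k j with hhv
            have h16 := ker16F4 hv hcol
            have hs := Finset.card_filter_add_card_filter_not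
              (s := (Finset.univ : Finset (Fin 3 → F4)))
              (fun y : Fin 3 → F4 => y 0 * hv 0 + y 1 * hv 1 + y 2 * hv 2 = 0)
            have hcu : (Finset.univ : Finset (Fin 3 → F4)).card = 64 := by
              rw [Finset.card_univ, card64F4]
            have hsub : T.filter (fun y => φ y j ≠ 0) ⊆
                Finset.univ.filter (fun y : Fin 3 → F4 =>
                  ¬(y 0 * hv 0 + y 1 * hv 1 + y 2 * hv 2 = 0)) := by
              intro y hy
              simp only [Finset.mem_filter, Finset.mem_univ, true_and] at hy ⊢
              have h2 := hy.2
              rw [hptw] at h2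
              exact h2
            have hle := Finset.card_le_card hsub
            rw [hcu, h16] at hs
            have hB : (Finset.univ.filter (fun y : Fin 3 → F4 =>
                ¬(y 0 * hv 0 + y 1 * hv 1 + y 2 * hv 2 = 0))).card = 48 :=
              Nat.add_left_cancel (hs.trans (by norm_num : (64 : ℕ) = 16 + 48))
            exact hle.trans (le_of_eq hB)
    _ = 48 * n := by
          rw [Finset.sum_const, Finset.card_univ, Fintype.card_fin, smul_eq_mul, mul_comm]
  have htot := Finset.sum_filter_add_sum_filter_not T (fun y => Even (wt (φ y)))
    (fun y => wt (φ y))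
  rcases Nat.even_or_odd D with hD | hD
  · have hTo : ∀ y ∈ T.filter (fun y => ¬Even (wt (φ y))), D + 1 ≤ wt (φ y) := by
      intro y hy
      rw [Finset.mem_filter] at hy
      have h1 := hWlow y hy.1
      have h2 := hy.2
      rcases Nat.lt_or_ge (wt (φ y)) (D + 1) with h | h
      · exfalso
        have heq : wt (φ y) = D := by omega
        rw [heq] at h2
        exact h2 hD
      · exact h
    have hsum1 := Finset.card_nsmul_le_sum (T.filter (fun y => Even (wt (φ y))))
      (fun y => wt (φ y)) D (fun y hy => hWlow y (Finset.mem_filter.mp hy).1)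
    have hsum2 := Finset.card_nsmul_le_sum (T.filter (fun y => ¬Even (wt (φ y))))
      (fun y => wt (φ y)) (D + 1) hTo
    rw [hsplitE, smul_eq_mul] at hsum1
    rw [hsplitO, smul_eq_mul] at hsum2
    constructor
    · omega
    · intro _
      omega
  · have hTe : ∀ y ∈ T.filter (fun y => Even (wt (φ y))), D + 1 ≤ wt (φ y) := by
      intro y hy
      rw [Finset.mem_filter] at hy
      have h1 := hWlow y hy.1
      have h2 := hy.2
      rcases Nat.lt_or_ge (wt (φ y)) (D + 1) with h | h
      · exfalso
        have heq : wt (φ y) = D := by omega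
        rw [heq] at h2
        exact (Nat.not_even_iff_odd.mpr hD) h2
      · exact h
    have hsum1 := Finset.card_nsmul_le_sum (T.filter (fun y => Even (wt (φ y))))
      (fun y => wt (φ y)) (D + 1) hTe
    have hsum2 := Finset.card_nsmul_le_sum (T.filter (fun y => ¬Even (wt (φ y))))
      (fun y => wt (φ y)) D (fun y hy => hWlow y (Finset.mem_filter.mp hy).1)
    rw [hsplitE, smul_eq_mul] at hsum1
    rw [hsplitO, smul_eq_mul] at hsum2
    constructor
    · omega
    · intro hDeven
      exact absurd hDeven (Nat.not_even_iff_odd.mpr hD)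

-- ====== assembly ======
lemma goodGen_family {b d0 : ℕ} (hb : goodGen b d0) :
    ∀ s : ℕ, goodGen (b + 21 * s) (d0 + 16 * s) := by
  intro s
  induction s with
  | zero => simpa using hb
  | succ m ih =>
      have hstep := goodGen_step ih
      have he1 : b + 21 * (m + 1) = b + 21 * m + 21 := by ring
      have he2 : d0 + 16 * (m + 1) = d0 + 16 * m + 16 := by ring
      rw [he1, he2]
      exact hstep

lemma ub_gen {n d : ℕ} (C : Submodule F4 (Fin n → F4))
    (h3 : Module.finrank F4 C = 3) (hlcd : IsHermLCD C)
    (hno : ¬∃ x ∈ C, x ≠ 0 ∧ wt x ≤ d) :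
    63 * (d + 1) + 27 ≤ 48 * n ∧ (Even (d + 1) → 63 * (d + 1) + 36 ≤ 48 * n) := by
  push_neg at hno
  have hmin : ∀ x ∈ C, x ≠ 0 → d + 1 ≤ wt x := by
    intro x hx hne
    exact Nat.succ_le_of_lt (hno x hx hne)
  exact upper_bound C h3 hlcd hmin

theorem stmt17' (s : ℕ) :
    d4Is (21 * s + 11) 3 (16 * s + 7) ∧
    d4Is (21 * s + 16) 3 (16 * s + 11) ∧
    d4Is (21 * s + 20) 3 (16 * s + 14) := by
  have hg11 : goodGen (21 * s + 11) (16 * s + 7) := by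
    have := goodGen_family (goodGen_of_K B11 KB11w KB11e KB11g) s
    have e1 : 11 + 21 * s = 21 * s + 11 := by ring
    have e2 : 7 + 16 * s = 16 * s + 7 := by ring
    rwa [e1, e2] at this
  have hg16 : goodGen (21 * s + 16) (16 * s + 11) := by
    have := goodGen_family (goodGen_of_K B16 KB16w KB16e KB16g) s
    have e1 : 16 + 21 * s = 21 * s + 16 := by ring
    have e2 : 11 + 16 * s = 16 * s + 11 := by ring
    rwa [e1, e2] at this
  have hg20 : goodGen (21 * s + 20) (16 * s + 14) := by
    have := goodGen_family (goodGen_of_K B20 KB20w KB20e KB20g) s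
    have e1 : 20 + 21 * s = 21 * s + 20 := by ring
    have e2 : 14 + 16 * s = 16 * s + 14 := by ring
    rwa [e1, e2] at this
  refine ⟨⟨exists_code (by omega) hg11, ?_⟩, ⟨exists_code (by omega) hg16, ?_⟩,
    ⟨exists_code (by omega) hg20, ?_⟩⟩
  · intro C h3 hlcd
    by_contra hno
    obtain ⟨h1, h2⟩ := ub_gen C h3 hlcd hno
    have heven : Even (16 * s + 7 + 1) := ⟨8 * s + 4, by ring⟩
    have := h2 heven
    omega
  · intro C h3 hlcd
    by_contra hno
    obtain ⟨h1, h2⟩ := ub_gen C h3 hlcd hno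
    have heven : Even (16 * s + 11 + 1) := ⟨8 * s + 6, by ring⟩
    have := h2 heven
    omega
  · intro C h3 hlcd
    by_contra hno
    obtain ⟨h1, h2⟩ := ub_gen C h3 hlcd hno
    omega


/-- `d₄(21s+11,3) = 16s+7`, `d₄(21s+16,3) = 16s+11`,
`d₄(21s+20,3) = 16s+14` for every nonnegative integer `s`. -/
theorem stmt17 (s : ℕ) :
    d4Is (21 * s + 11) 3 (16 * s + 7) ∧
    d4Is (21 * s + 16) 3 (16 * s + 11) ∧
    d4Is (21 * s + 20) 3 (16 * s + 14) := by
  exact stmt17' s
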